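/- Lasso saturation: for any b ∈ ℝ^m, A ∈ ℝ^{m×q} with q > m, and λ > 0, there exists a minimizer ω̂ of (1/2)‖b − Aω‖₂² + λ‖ω‖₁ with at most m nonzero entries. -/

import Mathlib

open Finset

lemma abs_add_sign (x y : ℝ) (hx : x ≠ 0) (h : |y| ≤ |x|) :
    |x + y| = |x| + Real.sign x * y := by
  rcases lt_or_gt_of_ne hx with h1 | h1
  · rw [Real.sign_of_neg h1, abs_of_neg h1] at *
    rw [abs_of_nonpos (by rcases abs_le.mp h with ⟨h2, h3⟩; linarith)]
    ring
  · rw [Real.sign_of_pos h1, abs_of_pos h1] at *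
    rw [abs_of_nonneg (by rcases abs_le.mp h with ⟨h2, h3⟩; linarith)]
    ring

lemma l1_line {q : ℕ} (ω c : Fin q → ℝ) (t : ℝ)
    (hsupp : ∀ j, c j ≠ 0 → ω j ≠ 0) (ht : ∀ j, |t * c j| ≤ |ω j|) :
    ∑ j, |ω j + t * c j| = ∑ j, |ω j| + t * ∑ j, Real.sign (ω j) * c j := by
  rw [Finset.mul_sum, ← Finset.sum_add_distrib]
  apply Finset.sum_congr rfl
  intro j _
  by_cases hc : c j = 0
  · simp [hc]
  · rw [abs_add_sign _ _ (hsupp j hc) (ht j)]; ring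

lemma exists_kernel_vec {m q : ℕ} (A : Matrix (Fin m) (Fin q) ℝ) (S : Finset (Fin q))
    (hS : m < S.card) :
    ∃ c : Fin q → ℝ, c ≠ 0 ∧ (∀ j, j ∉ S → c j = 0) ∧ A.mulVec c = 0 := by
  have hni : ¬ LinearIndependent ℝ (fun s : S => (fun i => A i s : Fin m → ℝ)) := by
    intro h
    have := h.fintype_card_le_finrank
    rw [Module.finrank_pi] at this
    simp [Fintype.card_coe] at this
    omega
  rw [Fintype.not_linearIndependent_iff] at hni
  obtain ⟨g, hg, s₀, hs₀⟩ := hni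
  refine ⟨fun j => if h : j ∈ S then g ⟨j, h⟩ else 0, ?_, ?_, ?_⟩
  · intro h
    apply hs₀
    have := congrFun h s₀
    simpa [s₀.2] using this
  · intro j hj; simp [hj]
  · funext i
    have hthis := congrFun hg i
    simp only [Finset.sum_apply, Pi.smul_apply, smul_eq_mul, Pi.zero_apply] at hthis
    show ∑ j, A i j * _ = 0
    rw [← Finset.sum_subset (Finset.subset_univ S) (by intro x _ hx; simp [hx])]
    rw [← Finset.sum_attach S (fun j => A i j * if h : j ∈ S then g ⟨j, h⟩ else 0)]
    rw [← hthis]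
    apply Finset.sum_congr rfl
    intro x _
    simp [x.2, mul_comm]

noncomputable def lassoF {m q : ℕ} (b : Fin m → ℝ) (A : Matrix (Fin m) (Fin q) ℝ) (lam : ℝ)
    (ω : Fin q → ℝ) : ℝ :=
  (1/2) * ∑ i, (b i - A.mulVec ω i)^2 + lam * ∑ j, |ω j|

lemma lasso_exists_min {m q : ℕ} (b : Fin m → ℝ) (A : Matrix (Fin m) (Fin q) ℝ)
    (lam : ℝ) (hlam : 0 < lam) :
    ∃ ω, ∀ ω', lassoF b A lam ω ≤ lassoF b A lam ω' := by
  have hc : Continuous (lassoF b A lam) := by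
    unfold lassoF Matrix.mulVec dotProduct
    fun_prop
  have hlb : ∀ ω, lam * ∑ j, |ω j| ≤ lassoF b A lam ω := by
    intro ω
    have : (0:ℝ) ≤ (1/2) * ∑ i, (b i - A.mulVec ω i)^2 := by positivity
    unfold lassoF; linarith
  set C := lassoF b A lam 0 / lam with hC
  set K : Set (Fin q → ℝ) := {ω | ∑ j, |ω j| ≤ C} with hK
  have hKc : IsClosed K := isClosed_le (by fun_prop) continuous_const
  have hKb : Bornology.IsBounded K := by
    apply Metric.isBounded_iff_subset_closedBall (0 : Fin q → ℝ) |>.mpr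
    refine ⟨C, fun x hx => ?_⟩
    simp only [Metric.mem_closedBall, dist_zero_right]
    have h0 : (0:ℝ) ≤ C := le_trans (by positivity) hx
    rw [pi_norm_le_iff_of_nonneg h0]
    intro i
    calc ‖x i‖ = |x i| := rfl
      _ ≤ ∑ j, |x j| := Finset.single_le_sum (f := fun j => |x j|)
            (fun j _ => abs_nonneg _) (mem_univ i)
      _ ≤ C := hx
  have hcomp : IsCompact K := Metric.isCompact_of_isClosed_isBounded hKc hKb
  have h0K : (0 : Fin q → ℝ) ∈ K := by
    simp only [hK, Set.mem_setOf_eq]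
    have := hlb 0
    simp at this ⊢
    rw [hC]
    exact (le_div_iff₀' hlam).mpr (by simpa using this)
  obtain ⟨ω, hωK, hωmin⟩ := hcomp.exists_isMinOn ⟨0, h0K⟩ hc.continuousOn
  refine ⟨ω, fun ω' => ?_⟩
  by_cases h : ω' ∈ K
  · exact hωmin h
  · have h1 : C < ∑ j, |ω' j| := lt_of_not_ge h
    have h2 : lassoF b A lam 0 < lassoF b A lam ω' := by
      calc lassoF b A lam 0 = lam * C := by rw [hC]; field_simp
        _ < lam * ∑ j, |ω' j| := (mul_lt_mul_iff_right₀ hlam).mpr h1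
        _ ≤ lassoF b A lam ω' := hlb ω'
    exact le_trans (hωmin h0K) h2.le

lemma lasso_reduce {m q : ℕ} (b : Fin m → ℝ) (A : Matrix (Fin m) (Fin q) ℝ)
    (lam : ℝ) (hlam : 0 < lam) (ω : Fin q → ℝ)
    (hmin : ∀ ω', lassoF b A lam ω ≤ lassoF b A lam ω')
    (hcard : m < (univ.filter (fun j => ω j ≠ 0)).card) :
    ∃ ω', (∀ ω'', lassoF b A lam ω' ≤ lassoF b A lam ω'') ∧
      (univ.filter (fun j => ω' j ≠ 0)).card < (univ.filter (fun j => ω j ≠ 0)).card := by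
  set S := univ.filter (fun j => ω j ≠ 0) with hSdef
  obtain ⟨c, hc0, hcS, hAc⟩ := exists_kernel_vec A S hcard
  have hsupp : ∀ j, c j ≠ 0 → ω j ≠ 0 := by
    intro j hj
    by_contra h
    exact hj (hcS j (by simp [hSdef, h]))
  -- the fit is unchanged along the line
  have hfit : ∀ t : ℝ, A.mulVec (ω + t • c) = A.mulVec ω := by
    intro t
    rw [Matrix.mulVec_add, Matrix.mulVec_smul, hAc]
    simp
  -- pick jstar minimizing |ω j| / |c j| over supp c
  have hTne : (univ.filter (fun j => c j ≠ 0)).Nonempty := by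
    rw [Finset.filter_nonempty_iff]
    by_contra h
    push_neg at h
    exact hc0 (funext fun j => by simpa using h j (mem_univ j))
  obtain ⟨jstar, hjT, hjmin⟩ :=
    Finset.exists_min_image _ (fun j => |ω j| / |c j|) hTne
  have hcjs : c jstar ≠ 0 := (Finset.mem_filter.mp hjT).2
  have hωjs : ω jstar ≠ 0 := hsupp _ hcjs
  set t := -(ω jstar) / c jstar with htdef
  have ht0 : t ≠ 0 := by
    simp only [htdef, div_ne_zero_iff, neg_ne_zero]
    exact ⟨hωjs, hcjs⟩
  have habs : |t| = |ω jstar| / |c jstar| := by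
    rw [htdef, abs_div, abs_neg]
  have hbound : ∀ s : ℝ, |s| = |t| → ∀ j, |s * c j| ≤ |ω j| := by
    intro s hs j
    by_cases hcj : c j = 0
    · simp [hcj]
    · have hjT' : j ∈ univ.filter (fun j => c j ≠ 0) := by simp [hcj]
      have := hjmin j hjT'
      rw [abs_mul, hs, habs]
      have hcjpos : 0 < |c j| := abs_pos.mpr hcj
      calc |ω jstar| / |c jstar| * |c j| ≤ |ω j| / |c j| * |c j| := by
            apply mul_le_mul_of_nonneg_right this (abs_nonneg _)
        _ = |ω j| := div_mul_cancel₀ _ (ne_of_gt hcjpos)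
  set σ := ∑ j, Real.sign (ω j) * c j with hσdef
  have hkey : ∀ s : ℝ, |s| = |t| →
      lassoF b A lam (ω + s • c) = lassoF b A lam ω + lam * (s * σ) := by
    intro s hs
    unfold lassoF
    rw [hfit s]
    have : ∑ j, |(ω + s • c) j| = ∑ j, |ω j| + s * σ := by
      have := l1_line ω c s hsupp (hbound s hs)
      simpa using this
    rw [this]; ring
  have hσ0 : σ = 0 := by
    have h1 := hmin (ω + t • c)
    have h2 := hmin (ω + (-t) • c)
    rw [hkey t rfl] at h1
    rw [hkey (-t) (abs_neg t)] at h2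
    have e1 : 0 ≤ t * σ := by nlinarith
    have e2 : t * σ ≤ 0 := by nlinarith
    have : t * σ = 0 := le_antisymm e2 e1
    rcases mul_eq_zero.mp this with h | h
    · exact absurd h ht0
    · exact h
  refine ⟨ω + t • c, ?_, ?_⟩
  · intro ω''
    rw [hkey t rfl, hσ0]
    simpa using hmin ω''
  · apply lt_of_le_of_lt (Finset.card_le_card (t := S.erase jstar) ?_)
    · rw [Finset.card_erase_of_mem]
      · have : 0 < S.card := by omega
        omega
      · simp [hSdef, hωjs]
    · intro j hj
      simp only [Finset.mem_filter, mem_univ, true_and, Pi.add_apply, Pi.smul_apply,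
        smul_eq_mul] at hj
      have hjne : j ≠ jstar := by
        intro h
        apply hj
        rw [h, htdef]
        field_simp
        ring
      have hjS : j ∈ S := by
        by_contra h
        exact hj (by rw [hcS j h, show ω j = 0 by simpa [hSdef] using h]; ring)
      exact Finset.mem_erase.mpr ⟨hjne, hjS⟩

/-- Lasso saturation: for any `b ∈ ℝ^m`, `A ∈ ℝ^{m×q}` with `q > m`, and `λ > 0`, there
exists a minimizer of `(1/2)‖b − Aω‖₂² + λ‖ω‖₁` with at most `m` nonzero entries. -/
theorem stmt_13 (m q : ℕ) (hq : m < q) (b : Fin m → ℝ) (A : Matrix (Fin m) (Fin q) ℝ)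
    (lam : ℝ) (hlam : 0 < lam) :
    ∃ ω : Fin q → ℝ,
      (∀ ω' : Fin q → ℝ,
        (1 / 2) * ∑ i, (b i - A.mulVec ω i) ^ 2 + lam * ∑ j, |ω j| ≤
        (1 / 2) * ∑ i, (b i - A.mulVec ω' i) ^ 2 + lam * ∑ j, |ω' j|) ∧
      Nat.card {j : Fin q // ω j ≠ 0} ≤ m := by
  obtain ⟨ω₀, hω₀⟩ := lasso_exists_min b A lam hlam
  have main : ∀ n (ω : Fin q → ℝ), (univ.filter (fun j => ω j ≠ 0)).card = n →
      (∀ ω', lassoF b A lam ω ≤ lassoF b A lam ω') →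
      ∃ ω', (∀ ω'', lassoF b A lam ω' ≤ lassoF b A lam ω'') ∧
        (univ.filter (fun j => ω' j ≠ 0)).card ≤ m := by
    intro n
    induction n using Nat.strong_induction_on with
    | _ n ih =>
      intro ω hn hmin
      by_cases h : (univ.filter (fun j => ω j ≠ 0)).card ≤ m
      · exact ⟨ω, hmin, h⟩
      · push_neg at h
        obtain ⟨ω', hmin', hlt⟩ := lasso_reduce b A lam hlam ω hmin h
        exact ih _ (hn ▸ hlt) ω' rfl hmin'
  obtain ⟨ω, hmin, hcard⟩ := main _ ω₀ rfl hω₀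
  refine ⟨ω, fun ω' => hmin ω', ?_⟩
  rw [Nat.card_eq_fintype_card, Fintype.card_subtype]
  exact hcard
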